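/- Let q ≥ 2 and n ≥ 1 be integers, let a, b ∈ {0,1,…,q−1}^n with Δ(a,b) = k, and let s be an integer with 0 ≤ s ≤ n. Let x be drawn uniformly at random from the Hamming sphere S(a,s) = {x ∈ {0,1,…,q−1}^n : Δ(x,a) = s} (which is non-empty). Then E[Δ(x,b) − Δ(x,a)] = k·(1 − s/n − s/((q−1)n)). -/

import Mathlib

open Finset Function

-- hammingDist as sum of indicators
lemma hd_eq_sum {m q : ℕ} (x y : Fin m → Fin q) :
    hammingDist x y = ∑ i, if x i ≠ y i then 1 else 0 := by
  rw [hammingDist, Finset.card_filter]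

lemma hd_cons {m q : ℕ} (v w : Fin q) (y z : Fin m → Fin q) :
    hammingDist (Fin.cons (α := fun _ => Fin q) v y) (Fin.cons (α := fun _ => Fin q) w z) =
      (if v = w then 0 else 1) + hammingDist y z := by
  rw [hd_eq_sum, hd_eq_sum, Fin.sum_univ_succ]
  simp [ite_not]

-- splitting a count over first coordinate
lemma card_filter_succ {m q : ℕ} (P : (Fin (m+1) → Fin q) → Prop) [DecidablePred P] :
    (univ.filter P).card =
      ∑ v : Fin q, (univ.filter fun y : Fin m → Fin q => P (Fin.cons (α := fun _ => Fin q) v y)).card := by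
  rw [Finset.card_eq_sum_card_fiberwise (f := fun x => x 0) (t := univ) (fun _ _ => mem_univ _)]
  refine Finset.sum_congr rfl fun v _ => ?_
  refine Finset.card_nbij' (i := Fin.tail) (j := Fin.cons (α := fun _ => Fin q) v) ?_ ?_ ?_ ?_
  · intro x hx
    simp only [mem_coe, mem_filter, mem_univ, true_and] at hx ⊢
    rw [← hx.2]
    simpa using hx.1
  · intro y hy
    simp only [mem_coe, mem_filter, mem_univ, true_and] at hy ⊢
    exact ⟨hy, rfl⟩
  · intro x hx
    simp only [mem_coe, mem_filter, mem_univ, true_and] at hx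
    rw [← hx.2]
    exact Fin.cons_self_tail x
  · intro y hy
    exact Fin.tail_cons (α := fun _ => Fin q) v y

lemma sphere_card {q : ℕ} : ∀ (m s : ℕ) (a : Fin m → Fin q),
    (univ.filter fun x : Fin m → Fin q => hammingDist x a = s).card
      = m.choose s * (q - 1) ^ s := by
  intro m
  induction m with
  | zero =>
    intro s a
    cases s with
    | zero => simp [hammingDist]
    | succ t =>
      rw [Nat.choose_eq_zero_of_lt (by omega), zero_mul, Finset.card_eq_zero,
        Finset.filter_eq_empty_iff]
      intro x _
      have : hammingDist x a = 0 := by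
        have := hammingDist_le_card_fintype (x := x) (y := a)
        simpa using this
      omega
  | succ m ih =>
    intro s a
    rw [card_filter_succ]
    have hrw : ∀ v : Fin q, ∀ y : Fin m → Fin q,
        hammingDist (Fin.cons (α := fun _ => Fin q) v y) a
        = (if v = a 0 then 0 else 1) + hammingDist y (Fin.tail a) := by
      intro v y
      conv_lhs => rw [← Fin.cons_self_tail a, hd_cons]
    have step : ∀ v : Fin q, (univ.filter fun y : Fin m → Fin q =>
        hammingDist (Fin.cons (α := fun _ => Fin q) v y) a = s).card
        = if v = a 0
          then (univ.filter fun y : Fin m → Fin q => hammingDist y (Fin.tail a) = s).card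
          else (univ.filter fun y : Fin m → Fin q => 1 + hammingDist y (Fin.tail a) = s).card := by
      intro v
      simp only [hrw]
      split_ifs with h <;> simp [h]
    simp only [step]
    rw [Finset.sum_ite, Finset.sum_const, Finset.sum_const, Finset.filter_eq' univ (a 0),
      if_pos (mem_univ _), Finset.card_singleton, one_smul, smul_eq_mul]
    have hcard : (univ.filter fun v : Fin q => ¬ v = a 0).card = q - 1 := by
      rw [Finset.filter_not, Finset.filter_eq' univ (a 0), if_pos (mem_univ _)]
      simp [Finset.card_sdiff, Finset.card_fin]
    rw [hcard]
    cases s with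
    | zero =>
      have hempty : (univ.filter fun y : Fin m → Fin q =>
          1 + hammingDist y (Fin.tail a) = 0) = ∅ := by
        rw [Finset.filter_eq_empty_iff]; intro y _; omega
      rw [hempty, ih 0]
      simp
    | succ t =>
      have hpred : (univ.filter fun y : Fin m → Fin q =>
          1 + hammingDist y (Fin.tail a) = t + 1)
          = univ.filter fun y : Fin m → Fin q => hammingDist y (Fin.tail a) = t := by
        apply Finset.filter_congr; intro y _; constructor <;> intro h <;> omega
      rw [hpred, ih (t + 1), ih t, Nat.choose_succ_succ, pow_succ]
      ring

lemma hd_comp {n q : ℕ} (x y : Fin n → Fin q) (e : Equiv.Perm (Fin n)) :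
    hammingDist (x ∘ e) (y ∘ e) = hammingDist x y := by
  unfold hammingDist
  refine Finset.card_nbij' (i := fun j => e j) (j := fun j => e.symm j) ?_ ?_ ?_ ?_
  · intro j hj; simp only [mem_coe, mem_filter, mem_univ, true_and, Function.comp] at hj ⊢; exact hj
  · intro j hj; simp only [mem_coe, mem_filter, mem_univ, true_and, Function.comp] at hj ⊢
    simpa using hj
  · intro j _; simp
  · intro j _; simp

lemma card_filter_comp {n q : ℕ} (e : Equiv.Perm (Fin n)) (P : (Fin n → Fin q) → Prop)
    [DecidablePred P] :
    (univ.filter P).card = (univ.filter fun x => P (x ∘ e)).card := by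
  refine Finset.card_nbij' (i := fun x => x ∘ e.symm) (j := fun x => x ∘ e) ?_ ?_ ?_ ?_
  · intro x hx; simp only [mem_coe, mem_filter, mem_univ, true_and] at hx ⊢
    have : (x ∘ e.symm) ∘ e = x := by ext j; simp
    rw [this]; exact hx
  · intro x hx; simp only [mem_coe, mem_filter, mem_univ, true_and] at hx ⊢; exact hx
  · intro x _; ext j; simp
  · intro x _; ext j; simp

lemma count_fix0 {q m : ℕ} (s : ℕ) (a : Fin (m+1) → Fin q) (v : Fin q) :
    (univ.filter fun x : Fin (m+1) → Fin q => hammingDist x a = s ∧ x 0 = v).card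
      = (univ.filter fun y : Fin m → Fin q =>
          (if v = a 0 then 0 else 1) + hammingDist y (Fin.tail a) = s).card := by
  rw [card_filter_succ]
  have hrw : ∀ w : Fin q, ∀ y : Fin m → Fin q,
      hammingDist (Fin.cons (α := fun _ => Fin q) w y) a
      = (if w = a 0 then 0 else 1) + hammingDist y (Fin.tail a) := by
    intro w y
    conv_lhs => rw [← Fin.cons_self_tail a, hd_cons]
  rw [Finset.sum_eq_single v]
  · congr 1; ext y
    simp only [mem_filter, mem_univ, true_and, Fin.cons_zero, and_true, hrw]
  · intro w _ hw
    rw [Finset.card_eq_zero, Finset.filter_eq_empty_iff]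
    intro y _
    simp only [Fin.cons_zero]
    tauto
  · intro h; exact absurd (mem_univ v) h

lemma count_fix {q m : ℕ} (s : ℕ) (a : Fin (m+1) → Fin q) (i : Fin (m+1)) (v : Fin q) :
    (univ.filter fun x : Fin (m+1) → Fin q => hammingDist x a = s ∧ x i = v).card
      = if v = a i then m.choose s * (q - 1) ^ s
        else (if s = 0 then 0 else m.choose (s-1) * (q - 1) ^ (s-1)) := by
  have key : (univ.filter fun x : Fin (m+1) → Fin q => hammingDist x a = s ∧ x i = v).card
      = (univ.filter fun x : Fin (m+1) → Fin q =>
          hammingDist x (a ∘ Equiv.swap 0 i) = s ∧ x 0 = v).card := by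
    rw [card_filter_comp (Equiv.swap 0 i)]
    congr 1; ext x
    simp only [mem_filter, mem_univ, true_and]
    have h1 : hammingDist (x ∘ Equiv.swap 0 i) a
        = hammingDist x (a ∘ Equiv.swap 0 i) := by
      conv_lhs => rw [show a = (a ∘ Equiv.swap 0 i) ∘ Equiv.swap 0 i by
        ext j; simp [Function.comp]]
      exact hd_comp _ _ _
    have h2 : (x ∘ Equiv.swap 0 i) i = x 0 := by simp [Function.comp]
    rw [h1, h2]
  rw [key, count_fix0]
  have hv0 : (a ∘ Equiv.swap 0 i) 0 = a i := by simp [Function.comp]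
  rw [hv0]
  split_ifs with h hs
  · simp only [zero_add]
    exact sphere_card m s _
  · subst hs
    rw [Finset.card_eq_zero, Finset.filter_eq_empty_iff]
    intro y _
    simp
  · obtain ⟨t, rfl⟩ := Nat.exists_eq_succ_of_ne_zero hs
    have hpred : (univ.filter fun y : Fin m → Fin q =>
        1 + hammingDist y (Fin.tail (a ∘ Equiv.swap 0 i)) = t + 1)
        = univ.filter fun y : Fin m → Fin q =>
            hammingDist y (Fin.tail (a ∘ Equiv.swap 0 i)) = t := by
      ext y
      simp only [mem_filter, mem_univ, true_and]
      rw [Nat.add_comm]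
      exact Nat.add_left_inj
    rw [hpred, sphere_card m t]
    simp

lemma alg (kk c1 cc Q M T P : ℝ) (hQ : Q ≠ 0) (hM : M ≠ 0) (e3 : T * cc = M * c1) :
    kk * ((cc - c1) * (Q * P) - c1 * P) = kk * (1 - T / M - T / (Q * M)) * (cc * (Q * P)) := by
  field_simp
  linear_combination (kk * P * (Q + 1)) * e3

/-- Exact expectation of d(x,b) - d(x,a) for x uniform on a Hamming sphere around a. -/
theorem stmt12 (q n : ℕ) (hq : 2 ≤ q) (hn : 1 ≤ n) (a b : Fin n → Fin q)
    (k s : ℕ) (hk : hammingDist a b = k) (hs : s ≤ n) :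
    (Finset.univ.filter fun x : Fin n → Fin q => hammingDist x a = s).Nonempty ∧
    (∑ x ∈ Finset.univ.filter fun x : Fin n → Fin q => hammingDist x a = s,
        ((hammingDist x b : ℝ) - (hammingDist x a : ℝ))) /
      ((Finset.univ.filter fun x : Fin n → Fin q => hammingDist x a = s).card : ℝ) =
      (k : ℝ) * (1 - (s : ℝ) / n - (s : ℝ) / (((q : ℝ) - 1) * n)) := by
  obtain ⟨m, rfl⟩ : ∃ m, n = m + 1 := ⟨n - 1, by omega⟩
  set S := Finset.univ.filter fun x : Fin (m+1) → Fin q => hammingDist x a = s with hS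
  set A : ℕ := m.choose s * (q - 1) ^ s with hA
  set B : ℕ := if s = 0 then 0 else m.choose (s-1) * (q - 1) ^ (s-1) with hB
  have hcard : S.card = (m+1).choose s * (q-1)^s := sphere_card (m+1) s a
  have hNpos : 0 < S.card := by
    rw [hcard]
    exact Nat.mul_pos (Nat.choose_pos hs) (Nat.pow_pos (by omega))
  refine ⟨Finset.card_pos.mp hNpos, ?_⟩
  have hterm : ∀ x ∈ S, ((hammingDist x b : ℝ) - (hammingDist x a : ℝ))
      = ∑ i, ((if x i ≠ b i then (1:ℝ) else 0) - (if x i ≠ a i then (1:ℝ) else 0)) := by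
    intro x _
    rw [Finset.sum_sub_distrib]
    congr 1 <;>
    · rw [hammingDist, Finset.card_filter, Nat.cast_sum]
      exact Finset.sum_congr rfl fun i _ => by split_ifs <;> simp
  have hinner : ∀ i : Fin (m+1),
      (∑ x ∈ S, ((if x i ≠ b i then (1:ℝ) else 0) - (if x i ≠ a i then (1:ℝ) else 0)))
      = if a i = b i then 0 else ((A:ℝ) - (B:ℝ)) := by
    intro i
    by_cases hab : a i = b i
    · rw [if_pos hab]
      apply Finset.sum_eq_zero
      intro x _
      rw [hab]; ring
    · rw [if_neg hab]
      have hpt : ∀ x ∈ S, ((if x i ≠ b i then (1:ℝ) else 0) - (if x i ≠ a i then (1:ℝ) else 0))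
          = (if x i = a i then (1:ℝ) else 0) - (if x i = b i then (1:ℝ) else 0) := by
        intro x _
        by_cases h1 : x i = a i <;> by_cases h2 : x i = b i
        · exact absurd (h1 ▸ h2 ▸ rfl : a i = b i) hab
        all_goals
          have hba : ¬ b i = a i := fun h => hab h.symm
          simp [h1, h2, hab, hba]
      rw [Finset.sum_congr rfl hpt, Finset.sum_sub_distrib, Finset.sum_boole, Finset.sum_boole]
      have e1 : (S.filter fun x => x i = a i).card = A := by
        rw [hS, Finset.filter_filter, count_fix s a i (a i), if_pos rfl]
      have e2 : (S.filter fun x => x i = b i).card = B := by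
        rw [hS, Finset.filter_filter, count_fix s a i (b i),
          if_neg (fun h => hab h.symm), hB]
      rw [e1, e2]
  have hsum : (∑ x ∈ S, ((hammingDist x b : ℝ) - (hammingDist x a : ℝ)))
      = (k : ℝ) * ((A:ℝ) - (B:ℝ)) := by
    rw [Finset.sum_congr rfl hterm, Finset.sum_comm,
      Finset.sum_congr rfl (fun i _ => hinner i), Finset.sum_ite, Finset.sum_const_zero,
      zero_add, Finset.sum_const, nsmul_eq_mul]
    have : (univ.filter fun i : Fin (m+1) => ¬ a i = b i).card = k := hk
    rw [this]
  rw [hsum, hcard]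
  -- final arithmetic
  have hq1 : (1:ℝ) ≤ (q:ℝ) - 1 := by
    have : (2:ℝ) ≤ (q:ℝ) := by exact_mod_cast hq
    linarith
  have hQ : ((q - 1 : ℕ) : ℝ) = (q:ℝ) - 1 := by
    have : (1:ℕ) ≤ q := by omega
    push_cast [this]; ring
  have hQpos : (0:ℝ) < (q:ℝ) - 1 := by linarith
  have hnpos : (0:ℝ) < (m:ℝ) + 1 := by positivity
  cases s with
  | zero =>
    simp only [hA, hB, if_pos rfl, Nat.choose_zero_right, pow_zero, mul_one,
      Nat.cast_one, Nat.cast_zero, Nat.cast_ofNat]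
    push_cast
    field_simp
    ring
  | succ t =>
    have hBv : (B:ℝ) = m.choose t * ((q:ℝ) - 1) ^ t := by
      rw [hB, if_neg (Nat.succ_ne_zero t)]
      push_cast [hQ]
      simp
    have hAv : (A:ℝ) = m.choose (t+1) * ((q:ℝ) - 1) ^ (t+1) := by
      rw [hA]; push_cast [hQ]; ring
    have hNv : (((m+1).choose (t+1) * (q-1)^(t+1) : ℕ) : ℝ)
        = (m+1).choose (t+1) * ((q:ℝ) - 1) ^ (t+1) := by
      push_cast [hQ]; ring
    have hchoosepos : (0:ℝ) < ((m+1).choose (t+1) : ℝ) := by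
      exact_mod_cast Nat.choose_pos (by omega : t + 1 ≤ m + 1)
    have hppos : (0:ℝ) < ((q:ℝ) - 1) ^ (t+1) := by positivity
    have h1 : (m.choose (t+1) : ℝ) = ((m+1).choose (t+1) : ℝ) - (m.choose t : ℝ) := by
      have := Nat.choose_succ_succ (m) (t)
      have : ((m+1).choose (t+1) : ℝ) = (m.choose t : ℝ) + (m.choose (t+1) : ℝ) := by
        exact_mod_cast congrArg (Nat.cast : ℕ → ℝ) this
      linarith
    have h2 : ((m:ℝ) + 1) * (m.choose t : ℝ) = ((m+1).choose (t+1) : ℝ) * ((t:ℝ) + 1) := by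
      exact_mod_cast congrArg (Nat.cast : ℕ → ℝ) (Nat.add_one_mul_choose_eq m t)
    have e3 : ((t:ℝ) + 1) * ((m+1).choose (t+1) : ℝ) = ((m:ℝ) + 1) * (m.choose t : ℝ) := by
      linarith [h2]
    rw [hBv, hAv, hNv, div_eq_iff (by positivity)]
    push_cast
    rw [h1, pow_succ]
    linear_combination alg (k:ℝ) (m.choose t : ℝ) ((m+1).choose (t+1) : ℝ) ((q:ℝ)-1)
      ((m:ℝ)+1) ((t:ℝ)+1) (((q:ℝ)-1)^t) (ne_of_gt hQpos) (by positivity) e3
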